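/- Let Z and X be real normed vector spaces, K ⊆ X a closed, convex, pointed cone with nonempty interior, M ⊆ Z a nonempty closed set, and F : Z ⇒ X a set-valued map with nonempty values. Suppose z̄ ∈ M is a sharp weak minimum of F on M with constant μ > 0 and direction e ∈ K \ {0}, i.e., for all z ∈ M, F(z̄) ⊄ F(z) − μ‖z − z̄‖ e + int K. Then for every T in the upper subdifferential ∂̂⁺F(z̄) and every u in the Bouligand tangent cone T_B(M, z̄), one has T(u) ∉ μ‖u‖ e − int K. -/

import Mathlib

open Set Filter Topology Metric Pointwise
open scoped ENNReal

/-- The excess `e(A, B) = sup_{x ∈ A} d(x, B)`, valued in `[0, ∞]`. -/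
noncomputable def excess {Y : Type*} [SeminormedAddCommGroup Y] (A B : Set Y) : ℝ≥0∞ :=
  ⨆ x ∈ A, EMetric.infEdist x B

/-- The upper Fréchet subdifferential of a set-valued map `F` at `zb`, defined via the
epigraphical map `Epi F(z) = F(z) + K`. -/
noncomputable def upperSubdiff {Z X : Type*} [NormedAddCommGroup Z] [NormedSpace ℝ Z]
    [NormedAddCommGroup X] [NormedSpace ℝ X] (K : Set X) (F : Z → Set X) (zb : Z) :
    Set (Z →L[ℝ] X) :=
  {T | Tendsto (fun z => excess (F zb + K + {T (z - zb)}) (F z + K) / ENNReal.ofReal ‖z - zb‖)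
      (𝓝[≠] zb) (𝓝 0)}

/-- The Bouligand tangent cone to `M` at `zb`. -/
def bouligandTangentCone {Z : Type*} [NormedAddCommGroup Z] [NormedSpace ℝ Z]
    (M : Set Z) (zb : Z) : Set Z :=
  {u | ∃ t : ℕ → ℝ, ∃ w : ℕ → Z, (∀ n, 0 < t n) ∧ Tendsto t atTop (𝓝 0) ∧
    Tendsto w atTop (𝓝 u) ∧ ∀ n, zb + t n • w n ∈ M}

private lemma aux_zero_not_interior {X : Type*} [NormedAddCommGroup X] [NormedSpace ℝ X]
    {K : Set X} (hK_cone : ∀ t : ℝ, 0 ≤ t → ∀ x ∈ K, t • x ∈ K)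
    (hK_pointed : K ∩ (-K) = {0}) {e : X} (he : e ∈ K \ {0}) :
    (0 : X) ∉ interior K := by
  intro h0
  have hen : e ≠ 0 := he.2
  have hepos : 0 < ‖e‖ := norm_pos_iff.mpr hen
  obtain ⟨δ, hδ, hball⟩ := Metric.isOpen_iff.mp isOpen_interior 0 h0
  have hv : (δ / (2 * ‖e‖)) • (-e) ∈ K := by
    apply interior_subset; apply hball
    rw [mem_ball_zero_iff, norm_smul, norm_neg, Real.norm_eq_abs, abs_of_pos (by positivity)]
    have h1 : δ / (2 * ‖e‖) * ‖e‖ = δ / 2 := by field_simp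
    rw [h1]; linarith
  have h2 := hK_cone ((2 * ‖e‖) / δ) (by positivity) _ hv
  have h3 : (2 * ‖e‖) / δ * (δ / (2 * ‖e‖)) = 1 := by field_simp
  rw [smul_smul, h3, one_smul] at h2
  have h4 : e ∈ K ∩ (-K) := ⟨he.1, by simpa using h2⟩
  rw [hK_pointed] at h4
  exact hen h4

private lemma aux_smul_interior {X : Type*} [NormedAddCommGroup X] [NormedSpace ℝ X]
    {K : Set X} (hK_cone : ∀ t : ℝ, 0 ≤ t → ∀ x ∈ K, t • x ∈ K) {t : ℝ} (ht : 0 < t)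
    {x : X} (hx : x ∈ interior K) : t • x ∈ interior K := by
  have hsub : t • interior K ⊆ interior K :=
    interior_maximal (fun y ⟨z, hz, hzy⟩ => hzy ▸ hK_cone t ht.le z (interior_subset hz))
      (isOpen_interior.smul₀ ht.ne')
  exact hsub (smul_mem_smul_set hx)

private lemma aux_add_interior {X : Type*} [NormedAddCommGroup X] [NormedSpace ℝ X]
    {K : Set X} (hK_add : K + K ⊆ K) {k x : X} (hk : k ∈ K) (hx : x ∈ interior K) :
    k + x ∈ interior K := by
  have hsub : (fun y => k + y) '' interior K ⊆ interior K := by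
    apply interior_maximal
    · rintro _ ⟨z, hz, rfl⟩
      exact hK_add (add_mem_add hk (interior_subset hz))
    · exact (Homeomorph.addLeft k).isOpenMap _ isOpen_interior
  exact hsub ⟨x, hx, rfl⟩

/-- Necessary optimality condition for sharp weak minima (Proposition 34). -/
theorem sharp_weak_minimum_necessary_condition {Z X : Type*} [NormedAddCommGroup Z]
    [NormedSpace ℝ Z] [NormedAddCommGroup X] [NormedSpace ℝ X]
    (K : Set X)
    (hK_closed : IsClosed K) (hK_conv : Convex ℝ K)
    (hK_cone : ∀ t : ℝ, 0 ≤ t → ∀ x ∈ K, t • x ∈ K)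
    (hK_add : K + K ⊆ K) (hK_pointed : K ∩ (-K) = {0})
    (hK_solid : (interior K).Nonempty)
    (M : Set Z) (hM : M.Nonempty) (hMclosed : IsClosed M)
    (F : Z → Set X) (hF : ∀ z, (F z).Nonempty)
    (zb : Z) (hzb : zb ∈ M)
    (μ : ℝ) (hμ : 0 < μ) (e : X) (he : e ∈ K \ {0})
    (hsharp : ∀ z ∈ M, ¬ F zb ⊆ F z - {(μ * ‖z - zb‖) • e} + interior K) :
    ∀ T ∈ upperSubdiff K F zb, ∀ u ∈ bouligandTangentCone M zb,
      (μ * ‖u‖) • e - T u ∉ interior K := by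
  intro T hT u hu hc
  by_cases hu0 : u = 0
  · subst hu0
    simp only [norm_zero, mul_zero, zero_smul, map_zero, sub_zero] at hc
    exact aux_zero_not_interior hK_cone hK_pointed he hc
  obtain ⟨t, w, htpos, ht0, hwu, hmem⟩ := hu
  have hupos : 0 < ‖u‖ := norm_pos_iff.mpr hu0
  set c := (μ * ‖u‖) • e - T u with hc_def
  obtain ⟨δ, hδpos, hball⟩ := Metric.isOpen_iff.mp isOpen_interior c hc
  set ε₀ := δ / (8 * (‖u‖ + 1)) with hε₀_def
  have hε₀ : 0 < ε₀ := by positivity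
  set z : ℕ → Z := fun n => zb + t n • w n with hz_def
  set v : ℕ → X := fun n => (μ * ‖w n‖) • e - T (w n) with hv_def
  -- eventuality 1: norm bounds on w
  have hwn : Tendsto (fun n => ‖w n‖) atTop (𝓝 ‖u‖) := hwu.norm
  have hEw : ∀ᶠ n in atTop, ‖w n‖ ∈ Ioo (‖u‖ / 2) (‖u‖ + 1) :=
    hwn.eventually_mem (Ioo_mem_nhds (by linarith) (by linarith))
  -- eventuality 2: v n close to c
  have hvt : Tendsto v atTop (𝓝 c) := by
    have h1 : Tendsto (fun n => (μ * ‖w n‖) • e) atTop (𝓝 ((μ * ‖u‖) • e)) :=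
      (hwn.const_mul μ).smul_const e
    have h2 : Tendsto (fun n => T (w n)) atTop (𝓝 (T u)) :=
      (T.continuous.tendsto u).comp hwu
    exact h1.sub h2
  have hEv : ∀ᶠ n in atTop, ‖v n - c‖ < δ / 2 := by
    filter_upwards [hvt.eventually_mem (Metric.ball_mem_nhds c (show (0:ℝ) < δ/2 by linarith))] with n hn
    rwa [mem_ball, dist_eq_norm] at hn
  -- z n tends to zb within the punctured neighborhood
  have hzt : Tendsto z atTop (𝓝[≠] zb) := by
    rw [tendsto_nhdsWithin_iff]
    constructor
    · have : Tendsto (fun n => t n • w n) atTop (𝓝 ((0 : ℝ) • u)) := ht0.smul hwu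
      rw [zero_smul] at this
      simpa [hz_def] using (tendsto_const_nhds (x := zb)).add this
    · filter_upwards [hEw] with n hn
      have hwn0 : w n ≠ 0 := by
        intro h; rw [h, norm_zero] at hn; linarith [hn.1]
      simp only [hz_def, mem_compl_iff, mem_singleton_iff]
      intro h
      exact smul_ne_zero (htpos n).ne' hwn0 (by simpa using h)
  -- eventuality 3: excess quotient small
  have hEq : ∀ᶠ n in atTop,
      excess (F zb + K + {T (z n - zb)}) (F (z n) + K) / ENNReal.ofReal ‖z n - zb‖
        < ENNReal.ofReal ε₀ :=
    (hT.comp hzt).eventually (gt_mem_nhds (ENNReal.ofReal_pos.mpr hε₀))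
  obtain ⟨n, hnw, hnv, hnq⟩ := (hEw.and (hEv.and hEq)).exists
  have htn : 0 < t n := htpos n
  have hwpos : 0 < ‖w n‖ := lt_trans (by positivity) hnw.1
  have hzsub : z n - zb = t n • w n := by simp [hz_def]
  have hnorm : ‖z n - zb‖ = t n * ‖w n‖ := by
    rw [hzsub, norm_smul, Real.norm_eq_abs, abs_of_pos htn]
  have hnormpos : 0 < ‖z n - zb‖ := by rw [hnorm]; positivity
  -- sharpness at z n
  obtain ⟨x, hx, hxnot⟩ := not_subset.mp (hsharp (z n) (hmem n))
  -- membership of the translated point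
  have h0K : (0 : X) ∈ K := by simpa using hK_cone 0 le_rfl e he.1
  have hp : x + T (z n - zb) ∈ F zb + K + {T (z n - zb)} := by
    have := add_mem_add (add_mem_add hx h0K) (mem_singleton (T (z n - zb)))
    simpa using this
  have h1 : EMetric.infEdist (x + T (z n - zb)) (F (z n) + K)
      ≤ excess (F zb + K + {T (z n - zb)}) (F (z n) + K) := by
    unfold excess; exact le_biSup (fun y => EMetric.infEdist y (F (z n) + K)) hp
  have hb0 : ENNReal.ofReal ‖z n - zb‖ ≠ 0 := by
    rw [Ne, ENNReal.ofReal_eq_zero, not_le]; exact hnormpos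
  have h2 : excess (F zb + K + {T (z n - zb)}) (F (z n) + K)
      < ENNReal.ofReal ε₀ * ENNReal.ofReal ‖z n - zb‖ :=
    (ENNReal.div_lt_iff (Or.inl hb0) (Or.inl ENNReal.ofReal_ne_top)).mp hnq
  have h3 : EMetric.infEdist (x + T (z n - zb)) (F (z n) + K)
      < ENNReal.ofReal (ε₀ * ‖z n - zb‖) := by
    rw [ENNReal.ofReal_mul hε₀.le]; exact lt_of_le_of_lt h1 h2
  obtain ⟨q, hqB, hdq⟩ := EMetric.infEdist_lt_iff.mp h3
  have hdist : dist (x + T (z n - zb)) q < ε₀ * ‖z n - zb‖ := edist_lt_ofReal.mp hdq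
  obtain ⟨y, hy, k, hk, hq'⟩ := hqB
  -- the error term
  set err := x + T (z n - zb) - q with herr_def
  have herrnorm : ‖err‖ < t n * (δ / 2) := by
    have h4 : ‖err‖ = dist (x + T (z n - zb)) q := by rw [dist_eq_norm]
    rw [h4]
    have h5 : ε₀ * ‖z n - zb‖ < t n * (δ / 2) := by
      rw [hnorm, hε₀_def]
      have hb : ‖w n‖ < ‖u‖ + 1 := hnw.2
      have h6 : δ / (8 * (‖u‖ + 1)) * ‖w n‖ < δ / 2 := by
        have h7 : δ / (8 * (‖u‖ + 1)) * ‖w n‖ < δ / (8 * (‖u‖ + 1)) * (‖u‖ + 1) := by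
          apply mul_lt_mul_of_pos_left hb hε₀
        have h8 : δ / (8 * (‖u‖ + 1)) * (‖u‖ + 1) = δ / 8 := by
          field_simp
        nlinarith
      nlinarith
    linarith
  set g := v n + (t n)⁻¹ • err with hg_def
  have hgball : g ∈ ball c δ := by
    rw [mem_ball, dist_eq_norm]
    have h9 : ‖g - c‖ ≤ ‖v n - c‖ + ‖(t n)⁻¹ • err‖ := by
      have : g - c = (v n - c) + (t n)⁻¹ • err := by rw [hg_def]; abel
      rw [this]; exact norm_add_le _ _
    have h10 : ‖(t n)⁻¹ • err‖ < δ / 2 := by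
      rw [norm_smul, Real.norm_eq_abs, abs_of_pos (inv_pos.mpr htn)]
      calc (t n)⁻¹ * ‖err‖ < (t n)⁻¹ * (t n * (δ / 2)) := by
            exact mul_lt_mul_of_pos_left herrnorm (inv_pos.mpr htn)
        _ = δ / 2 := by field_simp
    linarith
  have hgint : g ∈ interior K := hball hgball
  have htg : t n • g ∈ interior K := aux_smul_interior hK_cone htn hgint
  have hktg : k + t n • g ∈ interior K := aux_add_interior hK_add hk htg
  -- key algebraic identity
  have keyeq : x - y + (μ * ‖z n - zb‖) • e = k + t n • g := by
    have h0 : t n • ((t n)⁻¹ • err) = err := smul_inv_smul₀ htn.ne' err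
    rw [hg_def, smul_add, h0, hv_def, herr_def, ← hq', hnorm, hzsub, map_smul]
    module
  -- contradiction with hxnot
  apply hxnot
  have hxeq : x = (y - (μ * ‖z n - zb‖) • e) + (x - y + (μ * ‖z n - zb‖) • e) := by abel
  rw [hxeq, keyeq]
  exact add_mem_add (sub_mem_sub hy (mem_singleton _)) hktg
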